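/- arXiv:1708.01551 — 3 statements merged into one kernel-verified Lean document; each statement's English description precedes it below -/
import Mathlib

section
/- Let ħ > 0 and let M = X + iY be a complex symmetric n×n matrix with X positive definite and Y real symmetric. Then for every z ∈ ℝ^{2n} the Wigner transform satisfies Wφ_M^ħ(z) = (πħ)^{-n} e^{-(1/ħ) zᵀGz}, where G = SᵀS with S the real 2n×2n block matrix S = [[X^{1/2}, 0], [X^{-1/2}Y, X^{-1/2}]] (X^{1/2} being the positive definite square root of X); moreover S is symplectic, i.e. SᵀJS = J. -/
open MeasureTheory Complex Real
open scoped BigOperators Matrix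

noncomputable section

/-- Phase space points `z = (x,p)`. -/
abbrev PS (n : ℕ) := (Fin n → ℝ) × (Fin n → ℝ)

/-- Euclidean dot product. -/
def dotR {m : Type*} [Fintype m] (x y : m → ℝ) : ℝ := ∑ i, x i * y i

/-- The standard symplectic form `σ(z,z') = p·x' − p'·x`. -/
def symp {n : ℕ} (z z' : PS n) : ℝ := dotR z.2 z'.1 - dotR z'.2 z.1

/-- The Heisenberg operator `T̂(z₀)`. -/
def heis {n : ℕ} (hb : ℝ) (z₀ : PS n) (φ : (Fin n → ℝ) → ℂ) : (Fin n → ℝ) → ℂ :=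
  fun x => Complex.exp ((Complex.I / (hb : ℂ)) *
      ((dotR z₀.2 x - dotR z₀.2 z₀.1 / 2 : ℝ) : ℂ)) * φ (x - z₀.1)

/-- The phase space translation operator `T̃(z₀)`. -/
def psT {n : ℕ} (hb : ℝ) (z₀ : PS n) (Ψ : PS n → ℂ) : PS n → ℂ :=
  fun z => Complex.exp (-(Complex.I / (hb : ℂ)) * ((symp z z₀ : ℝ) : ℂ)) *
    Ψ (z - (2 : ℝ)⁻¹ • z₀)

/-- The `L²(ℝⁿ)` inner product `⟨ψ,φ⟩ = ∫ ψ conj φ`. -/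
def L2inner {n : ℕ} (ψ φ : (Fin n → ℝ) → ℂ) : ℂ :=
  ∫ x : Fin n → ℝ, ψ x * (starRingEnd ℂ) (φ x)

/-- The squared `L²(ℝⁿ)` norm. -/
def normSq2 {n : ℕ} (ψ : (Fin n → ℝ) → ℂ) : ℝ := ∫ x : Fin n → ℝ, ‖ψ x‖ ^ 2

/-- The `L²(ℝ²ⁿ)` (phase space) inner product. -/
def PSinner {n : ℕ} (Ψ Φ : PS n → ℂ) : ℂ :=
  ∫ z : PS n, Ψ z * (starRingEnd ℂ) (Φ z)

/-- The Weyl–Heisenberg system `G(φ,Λ)` is a frame with bounds `a`, `b`. -/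
def IsWHFrame {n : ℕ} (hb : ℝ) (φ : (Fin n → ℝ) → ℂ) (Λ : Set (PS n)) (a b : ℝ) : Prop :=
  ∀ ψ : (Fin n → ℝ) → ℂ, MemLp ψ 2 volume →
    a * normSq2 ψ ≤ ∑' zl : Λ, ‖L2inner ψ (heis hb (zl : PS n) φ)‖ ^ 2 ∧
    ∑' zl : Λ, ‖L2inner ψ (heis hb (zl : PS n) φ)‖ ^ 2 ≤ b * normSq2 ψ

/-- The cross-Wigner transform. -/
def crossWigner {n : ℕ} (hb : ℝ) (ψ φ : (Fin n → ℝ) → ℂ) : PS n → ℂ :=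
  fun z => (((2 * π * hb) ^ n : ℝ) : ℂ)⁻¹ *
    ∫ y : Fin n → ℝ, Complex.exp (-(Complex.I / (hb : ℂ)) * ((dotR z.2 y : ℝ) : ℂ)) *
      ψ (z.1 + (2 : ℝ)⁻¹ • y) * (starRingEnd ℂ) (φ (z.1 - (2 : ℝ)⁻¹ • y))

/-- The cross-ambiguity function. -/
def crossAmb {n : ℕ} (hb : ℝ) (ψ φ : (Fin n → ℝ) → ℂ) : PS n → ℂ :=
  fun z => (((2 * π * hb) ^ n : ℝ) : ℂ)⁻¹ *
    ∫ y : Fin n → ℝ, Complex.exp (-(Complex.I / (hb : ℂ)) * ((dotR z.2 y : ℝ) : ℂ)) *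
      ψ (y + (2 : ℝ)⁻¹ • z.1) * (starRingEnd ℂ) (φ (y - (2 : ℝ)⁻¹ • z.1))

/-- A phase space point as a `2n`-vector. -/
def vec {n : ℕ} (z : PS n) : (Fin n ⊕ Fin n) → ℝ := Sum.elim z.1 z.2

/-- A `2n`-vector as a phase space point. -/
def unvec {n : ℕ} (v : (Fin n ⊕ Fin n) → ℝ) : PS n := (v ∘ Sum.inl, v ∘ Sum.inr)

/-- Complex quadratic form `zᵀ F z` of a real vector. -/
def qfC {m : Type*} [Fintype m] (F : Matrix m m ℂ) (z : m → ℝ) : ℂ :=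
  ∑ i, ∑ j, (z i : ℂ) * F i j * (z j : ℂ)

/-- Real quadratic form `zᵀ G z`. -/
def qfR {m : Type*} [Fintype m] (G : Matrix m m ℝ) (z : m → ℝ) : ℝ :=
  ∑ i, ∑ j, z i * G i j * z j

/-- The generalized Gaussian `φ_M^hb`. -/
def gaussM {n : ℕ} (hb : ℝ) (M : Matrix (Fin n) (Fin n) ℂ) : (Fin n → ℝ) → ℂ :=
  fun x => (((π * hb) ^ (-(n : ℝ) / 4) * (M.map Complex.re).det ^ ((1 : ℝ) / 4) : ℝ) : ℂ) *
    Complex.exp (-(1 / (2 * (hb : ℂ))) * qfC M x)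

/-- The standard Gaussian `φ^hb`. -/
def stdGauss {n : ℕ} (hb : ℝ) : (Fin n → ℝ) → ℂ :=
  fun x => (((π * hb) ^ (-(n : ℝ) / 4) : ℝ) : ℂ) *
    Complex.exp (((-(dotR x x) / (2 * hb) : ℝ)) : ℂ)

/-- The standard symplectic matrix `J` (real version). -/
def JmatR (n : ℕ) : Matrix (Fin n ⊕ Fin n) (Fin n ⊕ Fin n) ℝ :=
  Matrix.fromBlocks 0 1 (-1) 0

/-- The standard symplectic matrix `J` (complex version). -/
def JmatC (n : ℕ) : Matrix (Fin n ⊕ Fin n) (Fin n ⊕ Fin n) ℂ :=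
  Matrix.fromBlocks 0 1 (-1) 0

/-- The square root of a positive semidefinite matrix, as `Matrix.PosSemidef.sqrt` was
defined in Mathlib (Dec 2024). -/
def psdSqrtOld {m : Type*} [Fintype m] [DecidableEq m] {A : Matrix m m ℝ}
    (hA : A.PosSemidef) : Matrix m m ℝ :=
  (hA.1.eigenvectorUnitary : Matrix m m ℝ) *
    Matrix.diagonal ((↑) ∘ (√·) ∘ hA.1.eigenvalues) *
    (star hA.1.eigenvectorUnitary : Matrix m m ℝ)

/-! ### Auxiliary lemmas -/

section AuxLemmas

variable {n : ℕ}

/-- Cross bilinear form. -/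
def crossQ (G : Matrix (Fin n) (Fin n) ℝ) (a b : Fin n → ℝ) : ℝ :=
  ∑ i, ∑ j, a i * G i j * b j

lemma dotR_eq_dot {m : Type*} [Fintype m] (x y : m → ℝ) : dotR x y = dotProduct x y := rfl

lemma qfR_eq_dot {m : Type*} [Fintype m] (G : Matrix m m ℝ) (v : m → ℝ) :
    qfR G v = dotProduct v (G.mulVec v) := by
  simp [qfR, dotProduct, Matrix.mulVec, Finset.mul_sum, mul_assoc]

lemma quadA (G : Matrix (Fin n) (Fin n) ℝ) (x y : Fin n → ℝ) :
    qfR G (x + (2:ℝ)⁻¹ • y) + qfR G (x - (2:ℝ)⁻¹ • y) = 2 * qfR G x + 2⁻¹ * qfR G y := by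
  unfold qfR
  rw [Finset.mul_sum, Finset.mul_sum, ← Finset.sum_add_distrib, ← Finset.sum_add_distrib]
  refine Finset.sum_congr rfl fun i _ => ?_
  rw [Finset.mul_sum, Finset.mul_sum, ← Finset.sum_add_distrib, ← Finset.sum_add_distrib]
  refine Finset.sum_congr rfl fun j _ => ?_
  simp only [Pi.add_apply, Pi.sub_apply, Pi.smul_apply, smul_eq_mul]
  ring

lemma quadB (G : Matrix (Fin n) (Fin n) ℝ) (x y : Fin n → ℝ) :
    qfR G (x + (2:ℝ)⁻¹ • y) - qfR G (x - (2:ℝ)⁻¹ • y) = crossQ G x y + crossQ G y x := by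
  unfold qfR crossQ
  rw [← Finset.sum_sub_distrib, ← Finset.sum_add_distrib]
  refine Finset.sum_congr rfl fun i _ => ?_
  rw [← Finset.sum_sub_distrib, ← Finset.sum_add_distrib]
  refine Finset.sum_congr rfl fun j _ => ?_
  simp only [Pi.add_apply, Pi.sub_apply, Pi.smul_apply, smul_eq_mul]
  ring

lemma crossQ_symm {G : Matrix (Fin n) (Fin n) ℝ} (hG : G.IsSymm) (a b : Fin n → ℝ) :
    crossQ G b a = crossQ G a b := by
  unfold crossQ
  rw [Finset.sum_comm]
  exact Finset.sum_congr rfl fun i _ => Finset.sum_congr rfl fun j _ => by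
    rw [hG.apply i j]; ring

lemma crossQ_eq_dotR {G : Matrix (Fin n) (Fin n) ℝ} (hG : G.IsSymm) (a b : Fin n → ℝ) :
    crossQ G a b = dotR (G.mulVec a) b := by
  rw [← crossQ_symm hG]
  unfold crossQ dotR
  refine Finset.sum_congr rfl fun i _ => ?_
  simp only [Matrix.mulVec, dotProduct, Finset.sum_mul]
  exact Finset.sum_congr rfl fun j _ => by ring

lemma dotR_add_left (a b c : Fin n → ℝ) : dotR (a + b) c = dotR a c + dotR b c := by
  simp [dotR, add_mul, Finset.sum_add_distrib]

lemma qfC_decomp (M : Matrix (Fin n) (Fin n) ℂ) (v : Fin n → ℝ) :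
    qfC M v = ((qfR (M.map Complex.re) v : ℝ) : ℂ)
      + Complex.I * ((qfR (M.map Complex.im) v : ℝ) : ℂ) := by
  unfold qfC qfR
  push_cast
  rw [Finset.mul_sum, ← Finset.sum_add_distrib]
  refine Finset.sum_congr rfl fun i _ => ?_
  rw [Finset.mul_sum, ← Finset.sum_add_distrib]
  refine Finset.sum_congr rfl fun j _ => ?_
  rw [← Complex.re_add_im (M i j)]
  simp only [Matrix.map_apply, Complex.add_re, Complex.ofReal_re, Complex.mul_re,
    Complex.I_re, Complex.I_im, Complex.ofReal_im, Complex.add_im, Complex.mul_im]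
  push_cast
  ring

section GI

variable {X : Matrix (Fin n) (Fin n) ℝ} (hX : X.PosDef)

lemma sqrtX_symm : (psdSqrtOld hX.posSemidef)ᵀ = psdSqrtOld hX.posSemidef := by
  have h : (psdSqrtOld hX.posSemidef).IsHermitian := by
    unfold psdSqrtOld Matrix.IsHermitian
    rw [Matrix.conjTranspose_mul, Matrix.conjTranspose_mul, Matrix.diagonal_conjTranspose]
    simp [Matrix.star_eq_conjTranspose, Matrix.mul_assoc]
  rwa [Matrix.IsHermitian, Matrix.conjTranspose_eq_transpose_of_trivial] at h

lemma sqrtX_mul_self : psdSqrtOld hX.posSemidef * psdSqrtOld hX.posSemidef = X := by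
  have hD : (Matrix.diagonal ((↑) ∘ (√·) ∘ hX.posSemidef.1.eigenvalues) :
      Matrix (Fin n) (Fin n) ℝ) * Matrix.diagonal ((↑) ∘ (√·) ∘ hX.posSemidef.1.eigenvalues)
      = Matrix.diagonal (RCLike.ofReal ∘ hX.posSemidef.1.eigenvalues) := by
    rw [Matrix.diagonal_mul_diagonal]
    congr 1
    funext i
    simp [Real.mul_self_sqrt (hX.posSemidef.eigenvalues_nonneg i)]
  unfold psdSqrtOld
  conv_rhs => rw [hX.posSemidef.1.spectral_theorem, Unitary.conjStarAlgAut_apply]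
  rw [← hD]
  have hU := Unitary.coe_star_mul_self hX.posSemidef.1.eigenvectorUnitary
  simp only [Matrix.mul_assoc] at hU ⊢
  rw [← Matrix.mul_assoc (star (hX.posSemidef.1.eigenvectorUnitary : Matrix (Fin n) (Fin n) ℝ)), ]
  simp [← Matrix.mul_assoc, hU]

lemma sqrtX_det_abs : |(psdSqrtOld hX.posSemidef).det| = Real.sqrt X.det := by
  rw [← Real.sqrt_sq_eq_abs, sq, ← Matrix.det_mul, sqrtX_mul_self hX]

lemma sqrtX_det_ne : (psdSqrtOld hX.posSemidef).det ≠ 0 := by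
  intro h
  have := sqrtX_det_abs hX
  rw [h, abs_zero] at this
  have hd : (0:ℝ) < X.det := hX.det_pos
  rw [eq_comm, Real.sqrt_eq_zero hd.le] at this
  exact hd.ne' this

lemma qf_factor {B X : Matrix (Fin n) (Fin n) ℝ} (hBs : Bᵀ = B) (hBX : B * B = X)
    (v : Fin n → ℝ) : qfR X v = dotR (B.mulVec v) (B.mulVec v) := by
  have hv : Matrix.vecMul v B = B.mulVec v := by
    nth_rewrite 1 [← hBs]
    rw [Matrix.vecMul_transpose]
  rw [qfR_eq_dot, dotR_eq_dot, ← hBX, ← Matrix.mulVec_mulVec, Matrix.dotProduct_mulVec, hv]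

lemma qfR_sqrt (v : Fin n → ℝ) :
    qfR X v = dotR ((psdSqrtOld hX.posSemidef).mulVec v) ((psdSqrtOld hX.posSemidef).mulVec v) :=
  qf_factor (sqrtX_symm hX) (sqrtX_mul_self hX) v

lemma gauss_int (hb : ℝ) (hhb : 0 < hb) (w : Fin n → ℝ) :
    ∫ y : Fin n → ℝ, Complex.exp (((-(4*hb)⁻¹ * qfR X y : ℝ) : ℂ)
        + (-(Complex.I/(hb:ℂ))) * ((dotR w y : ℝ) : ℂ))
      = (((Real.sqrt X.det)⁻¹ * (4*π*hb)^((n:ℝ)/2) : ℝ) : ℂ) *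
        Complex.exp (((-hb⁻¹ * dotR ((psdSqrtOld hX.posSemidef)⁻¹.mulVec w)
          ((psdSqrtOld hX.posSemidef)⁻¹.mulVec w) : ℝ) : ℂ)) := by
  have hdet := sqrtX_det_ne hX
  have hdetinv : ((psdSqrtOld hX.posSemidef)⁻¹).det ≠ 0 := by
    rw [Matrix.det_nonsing_inv, Ring.inverse_eq_inv']
    exact inv_ne_zero hdet
  have hunit : IsUnit (psdSqrtOld hX.posSemidef).det := isUnit_iff_ne_zero.mpr hdet
  set f : (Fin n → ℝ) → ℂ := fun y => Complex.exp (((-(4*hb)⁻¹ * qfR X y : ℝ) : ℂ)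
        + (-(Complex.I/(hb:ℂ))) * ((dotR w y : ℝ) : ℂ)) with hf
  have hcont : Continuous f := by
    rw [hf]; unfold qfR dotR; fun_prop
  have hmap := Real.map_matrix_volume_pi_eq_smul_volume_pi (M := (psdSqrtOld hX.posSemidef)⁻¹) hdetinv
  have hcv : ∫ u : Fin n → ℝ, f ((psdSqrtOld hX.posSemidef)⁻¹.mulVec u)
      = |((psdSqrtOld hX.posSemidef)⁻¹).det|⁻¹ * ∫ y, f y := by
    have h1 : ∫ y, f y ∂(Measure.map (Matrix.toLin' ((psdSqrtOld hX.posSemidef)⁻¹)) volume)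
        = ∫ u, f ((psdSqrtOld hX.posSemidef)⁻¹.mulVec u) := by
      rw [integral_map (by fun_prop) (hcont.aestronglyMeasurable)]
      simp [Matrix.toLin'_apply]
    rw [← h1, hmap, integral_smul_measure, ENNReal.toReal_ofReal (by positivity),
      abs_inv, Complex.real_smul, Complex.ofReal_inv]
  set v : Fin n → ℝ := (psdSqrtOld hX.posSemidef)⁻¹.mulVec w with hv
  have hsymi : ((psdSqrtOld hX.posSemidef)⁻¹)ᵀ = (psdSqrtOld hX.posSemidef)⁻¹ := by
    rw [Matrix.transpose_nonsing_inv, sqrtX_symm hX]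
  have hq : ∀ u : Fin n → ℝ, qfR X ((psdSqrtOld hX.posSemidef)⁻¹.mulVec u) = dotR u u := by
    intro u
    rw [qfR_sqrt hX, Matrix.mulVec_mulVec, Matrix.mul_nonsing_inv _ hunit, Matrix.one_mulVec]
  have hd : ∀ u : Fin n → ℝ, dotR w ((psdSqrtOld hX.posSemidef)⁻¹.mulVec u) = dotR v u := by
    intro u
    rw [dotR_eq_dot, dotR_eq_dot, Matrix.dotProduct_mulVec, hv]
    congr 1
    nth_rewrite 1 [← hsymi]
    rw [Matrix.vecMul_transpose]
  have hfu : ∀ u : Fin n → ℝ, f ((psdSqrtOld hX.posSemidef)⁻¹.mulVec u)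
      = Complex.exp (-∑ i, (((4*hb)⁻¹ : ℝ) : ℂ) * ((u i : ℝ) : ℂ)^2
          + ∑ i, (-(Complex.I/(hb:ℂ)) * ((v i : ℝ) : ℂ)) * ((u i : ℝ) : ℂ)) := by
    intro u
    rw [hf]
    simp only
    rw [hq, hd]
    congr 1
    unfold dotR
    push_cast
    rw [Finset.mul_sum, Finset.mul_sum, ← Finset.sum_neg_distrib]
    congr 1
    · exact Finset.sum_congr rfl fun i _ => by ring
    · exact Finset.sum_congr rfl fun i _ => by ring
  have hhb4 : ∀ i : Fin n, 0 < ((((4*hb)⁻¹ : ℝ) : ℂ)).re := by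
    intro i; rw [Complex.ofReal_re]; positivity
  have hint := GaussianFourier.integral_cexp_neg_sum_mul_add
    (b := fun _ : Fin n => (((4*hb)⁻¹ : ℝ) : ℂ))
    hhb4 (fun i => -(Complex.I/(hb:ℂ)) * ((v i : ℝ) : ℂ))
  have hbne : (hb : ℂ) ≠ 0 := Complex.ofReal_ne_zero.mpr hhb.ne'
  have hval : ∫ u : Fin n → ℝ, f ((psdSqrtOld hX.posSemidef)⁻¹.mulVec u)
      = (((4*π*hb)^((n:ℝ)/2) : ℝ) : ℂ) *
        Complex.exp (((-hb⁻¹ * dotR v v : ℝ) : ℂ)) := by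
    rw [integral_congr_ae (Filter.Eventually.of_forall hfu), hint,
      Finset.prod_mul_distrib, Finset.prod_const, ← Complex.exp_sum]
    congr 1
    · rw [Finset.card_univ, Fintype.card_fin]
      have h1 : (↑π / (((4*hb)⁻¹ : ℝ) : ℂ)) = ((4*π*hb : ℝ) : ℂ) := by
        push_cast
        field_simp
      have h12 : (1/2 : ℂ) = ((1/2 : ℝ) : ℂ) := by norm_num
      rw [h1, h12, ← Complex.ofReal_cpow (by positivity : (0:ℝ) ≤ 4*π*hb),
        ← Complex.ofReal_pow]
      congr 1
      rw [← Real.rpow_natCast ((4*π*hb) ^ (1/2 : ℝ)) n, ← Real.rpow_mul (by positivity)]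
      congr 1
      ring
    · have h2 : ∀ i : Fin n, (-(Complex.I/(hb:ℂ)) * ((v i : ℝ) : ℂ))^2 / (4 * (((4*hb)⁻¹ : ℝ) : ℂ))
          = (-(hb⁻¹:ℝ) : ℂ) * (((v i : ℝ) : ℂ) * ((v i : ℝ) : ℂ)) := by
        intro i
        push_cast
        rw [div_eq_iff (by
          push_cast
          intro h
          apply hbne
          field_simp at h; simp at h)]
        field_simp
        rw [Complex.I_sq]
        ring
      rw [Finset.sum_congr rfl fun i _ => h2 i]
      unfold dotR
      push_cast
      rw [Finset.mul_sum]
  have habs : |((psdSqrtOld hX.posSemidef)⁻¹).det| = (Real.sqrt X.det)⁻¹ := by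
    rw [Matrix.det_nonsing_inv, Ring.inverse_eq_inv', abs_inv, sqrtX_det_abs hX]
  rw [hval, habs, inv_inv] at hcv
  have hs : ((Real.sqrt X.det : ℝ) : ℂ) ≠ 0 :=
    Complex.ofReal_ne_zero.mpr (Real.sqrt_ne_zero'.mpr hX.det_pos)
  have h4 := congrArg (fun t => (((Real.sqrt X.det : ℝ) : ℂ))⁻¹ * t) hcv
  rw [inv_mul_cancel_left₀ hs] at h4
  rw [← h4]
  push_cast
  ring

end GI

lemma symplectic_abstract (A C Y : Matrix (Fin n) (Fin n) ℝ)
    (hA : Aᵀ = A) (hC : Cᵀ = C) (hY : Yᵀ = Y)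
    (hAC : A * C = 1) (hCA : C * A = 1) :
    (Matrix.fromBlocks A 0 (C * Y) C)ᵀ * JmatR n * (Matrix.fromBlocks A 0 (C * Y) C)
      = JmatR n := by
  rw [JmatR, Matrix.fromBlocks_transpose, Matrix.fromBlocks_multiply, Matrix.fromBlocks_multiply]
  simp only [Matrix.mul_zero, Matrix.zero_mul, Matrix.mul_one, Matrix.one_mul, add_zero, zero_add,
    Matrix.mul_neg, Matrix.neg_mul, Matrix.transpose_zero, Matrix.transpose_mul, hA, hC, hY]
  rw [Matrix.mul_assoc Y C A, hCA, Matrix.mul_one, ← Matrix.mul_assoc A C Y, hAC,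
    Matrix.one_mul, neg_add_cancel]

lemma qf_block (A C Y : Matrix (Fin n) (Fin n) ℝ) (x p : Fin n → ℝ) :
    qfR ((Matrix.fromBlocks A 0 (C * Y) C)ᵀ * (Matrix.fromBlocks A 0 (C * Y) C))
      (vec (x, p))
      = dotR (A.mulVec x) (A.mulVec x)
        + dotR (C.mulVec (Y.mulVec x + p)) (C.mulVec (Y.mulVec x + p)) := by
  have h1 : ∀ v : (Fin n ⊕ Fin n) → ℝ,
      qfR ((Matrix.fromBlocks A 0 (C * Y) C)ᵀ * (Matrix.fromBlocks A 0 (C * Y) C)) v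
        = dotR ((Matrix.fromBlocks A 0 (C * Y) C).mulVec v)
            ((Matrix.fromBlocks A 0 (C * Y) C).mulVec v) := by
    intro v
    rw [qfR_eq_dot, dotR_eq_dot, ← Matrix.mulVec_mulVec, Matrix.dotProduct_mulVec,
      Matrix.vecMul_transpose]
  rw [h1]
  have h2 : (Matrix.fromBlocks A 0 (C * Y) C).mulVec (vec (x, p))
      = Sum.elim (A.mulVec x) (C.mulVec (Y.mulVec x + p)) := by
    show (Matrix.fromBlocks A 0 (C * Y) C).mulVec (Sum.elim x p) = _
    rw [Matrix.fromBlocks_mulVec]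
    simp only [Sum.elim_comp_inl, Sum.elim_comp_inr, Matrix.zero_mulVec, add_zero,
      Matrix.mulVec_add, ← Matrix.mulVec_mulVec]
  rw [h2]
  simp [dotR, Fintype.sum_sum_type]

lemma const_eq (n : ℕ) {t d : ℝ} (ht : 0 < t) (hd : 0 < d) :
    ((2*t)^n)⁻¹ * ((t^(-(n:ℝ)/4) * d^((1:ℝ)/4)) * (t^(-(n:ℝ)/4) * d^((1:ℝ)/4)))
      * ((Real.sqrt d)⁻¹ * (4*t)^((n:ℝ)/2)) = ((t^n)⁻¹) := by
  have h1 : t^(-(n:ℝ)/4) * t^(-(n:ℝ)/4) * t^((n:ℝ)/2) = 1 := by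
    rw [← Real.rpow_add ht, ← Real.rpow_add ht,
      show (-(n:ℝ)/4 + -(n:ℝ)/4 + (n:ℝ)/2) = 0 by ring, Real.rpow_zero]
  have h2 : d^((1:ℝ)/4) * d^((1:ℝ)/4) * (Real.sqrt d)⁻¹ = 1 := by
    rw [Real.sqrt_eq_rpow, ← Real.rpow_neg hd.le, ← Real.rpow_add hd, ← Real.rpow_add hd]
    norm_num
  have h3 : (4*t)^((n:ℝ)/2) = 2^n * t^((n:ℝ)/2) := by
    rw [Real.mul_rpow (by norm_num) ht.le]
    congr 1
    rw [show (4:ℝ) = (2:ℝ)^(2:ℕ) by norm_num, ← Real.rpow_natCast (2:ℝ) 2,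
      ← Real.rpow_mul (by norm_num : (0:ℝ) ≤ 2), ← Real.rpow_natCast (2:ℝ) n]
    congr 1
    push_cast
    ring
  have h4 : ((2*t)^n : ℝ) = 2^n * t^n := by rw [mul_pow]
  have h5 : (2:ℝ)^n ≠ 0 := by positivity
  have h6 : (t:ℝ)^n ≠ 0 := by positivity
  calc ((2*t)^n)⁻¹ * ((t^(-(n:ℝ)/4) * d^((1:ℝ)/4)) * (t^(-(n:ℝ)/4) * d^((1:ℝ)/4)))
      * ((Real.sqrt d)⁻¹ * (4*t)^((n:ℝ)/2))
      = (2^n * t^n)⁻¹ * (2^n) * (t^(-(n:ℝ)/4) * t^(-(n:ℝ)/4) * t^((n:ℝ)/2))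
        * (d^((1:ℝ)/4) * d^((1:ℝ)/4) * (Real.sqrt d)⁻¹) := by
        rw [h4, h3]; ring
    _ = (t^n)⁻¹ := by
        rw [h1, h2, mul_inv]
        field_simp

end AuxLemmas

/-- the Wigner transform of a generalized Gaussian, and the symplectic
factorization `G = SᵀS` of its Gram matrix. -/
theorem stmt1 (hb : ℝ) (hhb : 0 < hb) (n : ℕ)
    (M : Matrix (Fin n) (Fin n) ℂ) (hMsymm : M.IsSymm)
    (hX : (M.map Complex.re).PosDef) :
    (∀ z : PS n,
      crossWigner hb (gaussM hb M) (gaussM hb M) z =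
        ((((π * hb) ^ n : ℝ) : ℂ))⁻¹ *
          Complex.exp (((-(1 / hb) *
            qfR ((Matrix.fromBlocks (psdSqrtOld hX.posSemidef) 0
                ((psdSqrtOld hX.posSemidef)⁻¹ * M.map Complex.im) (psdSqrtOld hX.posSemidef)⁻¹)ᵀ *
              (Matrix.fromBlocks (psdSqrtOld hX.posSemidef) 0
                ((psdSqrtOld hX.posSemidef)⁻¹ * M.map Complex.im) (psdSqrtOld hX.posSemidef)⁻¹))
            (vec z) : ℝ)) : ℂ)) ∧
    (Matrix.fromBlocks (psdSqrtOld hX.posSemidef) 0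
        ((psdSqrtOld hX.posSemidef)⁻¹ * M.map Complex.im) (psdSqrtOld hX.posSemidef)⁻¹)ᵀ * JmatR n *
      (Matrix.fromBlocks (psdSqrtOld hX.posSemidef) 0
        ((psdSqrtOld hX.posSemidef)⁻¹ * M.map Complex.im) (psdSqrtOld hX.posSemidef)⁻¹) = JmatR n := by
  set X : Matrix (Fin n) (Fin n) ℝ := M.map Complex.re with hXdef
  set Y : Matrix (Fin n) (Fin n) ℝ := M.map Complex.im with hYdef
  have hYsymm : Yᵀ = Y := by
    rw [hYdef, ← Matrix.transpose_map, hMsymm.eq]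
  have hAsymm := sqrtX_symm hX
  have hCsymm : ((psdSqrtOld hX.posSemidef)⁻¹)ᵀ = (psdSqrtOld hX.posSemidef)⁻¹ := by
    rw [Matrix.transpose_nonsing_inv, sqrtX_symm hX]
  have hunit : IsUnit (psdSqrtOld hX.posSemidef).det := isUnit_iff_ne_zero.mpr (sqrtX_det_ne hX)
  have hYsymm2 : Y.IsSymm := hYsymm
  have hbne : (hb : ℂ) ≠ 0 := Complex.ofReal_ne_zero.mpr hhb.ne'
  constructor
  · intro z
    set w : Fin n → ℝ := Y.mulVec z.1 + z.2 with hw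
    have key : ∀ y : Fin n → ℝ,
        Complex.exp (-(Complex.I / (hb:ℂ)) * ((dotR z.2 y : ℝ) : ℂ)) *
            gaussM hb M (z.1 + (2:ℝ)⁻¹ • y) *
            (starRingEnd ℂ) (gaussM hb M (z.1 - (2:ℝ)⁻¹ • y))
          = ((((π * hb) ^ (-(n : ℝ) / 4) * X.det ^ ((1:ℝ) / 4)) *
                ((π * hb) ^ (-(n : ℝ) / 4) * X.det ^ ((1:ℝ) / 4)) : ℝ) : ℂ) *
              Complex.exp (((-hb⁻¹ * qfR X z.1 : ℝ) : ℂ)) *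
            Complex.exp (((-(4*hb)⁻¹ * qfR X y : ℝ) : ℂ)
              + (-(Complex.I/(hb:ℂ))) * ((dotR w y : ℝ) : ℂ)) := by
      intro y
      have hAq := quadA X z.1 y
      have hBq := quadB Y z.1 y
      rw [show crossQ Y y z.1 = crossQ Y z.1 y from crossQ_symm hYsymm2 _ _,
        crossQ_eq_dotR hYsymm2] at hBq
      have hwq : dotR w y = dotR (Y.mulVec z.1) y + dotR z.2 y := dotR_add_left _ _ _
      have hA' := congrArg (fun r : ℝ => (r : ℂ)) hAq
      have hB' := congrArg (fun r : ℝ => (r : ℂ)) hBq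
      have hw' := congrArg (fun r : ℝ => (r : ℂ)) hwq
      push_cast at hA' hB' hw'
      unfold gaussM
      rw [qfC_decomp, qfC_decomp]
      rw [map_mul, Complex.conj_ofReal, ← Complex.exp_conj, map_mul, map_neg, map_div₀,
        map_one, map_mul, map_ofNat, Complex.conj_ofReal, map_add, map_mul,
        Complex.conj_ofReal, Complex.conj_ofReal, Complex.conj_I]
      have hmul : ∀ (a : ℝ) (u v₁ v₂ : ℂ),
          Complex.exp u * ((a:ℂ) * Complex.exp v₁) * ((a:ℂ) * Complex.exp v₂)
            = ((a * a : ℝ) : ℂ) * Complex.exp (u + v₁ + v₂) := by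
        intro a u v₁ v₂
        rw [Complex.exp_add, Complex.exp_add]
        push_cast
        ring
      rw [← hXdef, ← hYdef, hmul]
      conv_rhs => rw [mul_assoc, ← Complex.exp_add]
      congr 1
      congr 1
      push_cast
      linear_combination (-(1/(2*(hb:ℂ)))) * hA' + (-(Complex.I/(2*(hb:ℂ)))) * hB'
        + (Complex.I/(hb:ℂ)) * hw'
    show ((((2 * π * hb) ^ n : ℝ) : ℂ))⁻¹ * (∫ y : Fin n → ℝ, _) = _
    rw [integral_congr_ae (Filter.Eventually.of_forall key), MeasureTheory.integral_const_mul,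
      gauss_int hX hb hhb w]
    have hqf : qfR ((Matrix.fromBlocks (psdSqrtOld hX.posSemidef) 0
          ((psdSqrtOld hX.posSemidef)⁻¹ * Y) (psdSqrtOld hX.posSemidef)⁻¹)ᵀ *
        (Matrix.fromBlocks (psdSqrtOld hX.posSemidef) 0
          ((psdSqrtOld hX.posSemidef)⁻¹ * Y) (psdSqrtOld hX.posSemidef)⁻¹)) (vec z)
        = qfR X z.1 + dotR ((psdSqrtOld hX.posSemidef)⁻¹.mulVec w) ((psdSqrtOld hX.posSemidef)⁻¹.mulVec w) := by
      have hqb := qf_block (psdSqrtOld hX.posSemidef) ((psdSqrtOld hX.posSemidef)⁻¹) Y z.1 z.2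
      rw [show vec z = vec (z.1, z.2) from rfl, hqb, ← qfR_sqrt hX, ← hw]
    have hrsum : (-hb⁻¹ * qfR X z.1 : ℝ) + (-hb⁻¹ * dotR ((psdSqrtOld hX.posSemidef)⁻¹.mulVec w)
          ((psdSqrtOld hX.posSemidef)⁻¹.mulVec w) : ℝ)
        = -(1/hb) * qfR ((Matrix.fromBlocks (psdSqrtOld hX.posSemidef) 0
          ((psdSqrtOld hX.posSemidef)⁻¹ * Y) (psdSqrtOld hX.posSemidef)⁻¹)ᵀ *
        (Matrix.fromBlocks (psdSqrtOld hX.posSemidef) 0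
          ((psdSqrtOld hX.posSemidef)⁻¹ * Y) (psdSqrtOld hX.posSemidef)⁻¹)) (vec z) := by
      rw [hqf]
      ring
    have hcR : (((2*π*hb)^n : ℝ))⁻¹ * (((π * hb) ^ (-(n : ℝ) / 4) * X.det ^ ((1:ℝ) / 4)) *
          ((π * hb) ^ (-(n : ℝ) / 4) * X.det ^ ((1:ℝ) / 4)))
        * ((Real.sqrt X.det)⁻¹ * (4*π*hb)^((n:ℝ)/2)) = (((π*hb)^n : ℝ))⁻¹ := by
      have hc := const_eq n (show (0:ℝ) < π*hb by positivity) hX.det_pos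
      rw [show 2*(π*hb) = 2*π*hb by ring, show 4*(π*hb) = 4*π*hb by ring] at hc
      exact hc
    rw [mul_assoc, mul_mul_mul_comm, ← Complex.exp_add, ← Complex.ofReal_add, hrsum,
      ← mul_assoc, ← Complex.ofReal_mul, ← Complex.ofReal_inv, ← Complex.ofReal_mul,
      ← Complex.ofReal_inv]
    congr 2
    rw [← hcR]
    ring
  · exact symplectic_abstract _ _ _ hAsymm hCsymm hYsymm
      (Matrix.mul_nonsing_inv _ hunit) (Matrix.nonsing_inv_mul _ hunit)
end
end

section
/- Let S be a symplectic 2n×2n real matrix (SᵀJS = J) and let U be a unitary operator on L²(ℝⁿ) satisfying the symplectic covariance relation U ∘ T̂(z) ∘ U⁻¹ = T̂(Sz) for all z ∈ ℝ^{2n}. Then for every φ ∈ L²(ℝⁿ), every countable set Λ ⊂ ℝ^{2n}, and every a, b > 0: the Weyl–Heisenberg system G(φ,Λ) is a frame with bounds a, b if and only if G(Uφ, SΛ) is a frame with bounds a, b, where SΛ = {Sz_λ : z_λ ∈ Λ}. In particular, G(φ,Λ) is a tight frame if and only if G(Uφ, SΛ) is a tight frame. -/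
open MeasureTheory Complex Real
open scoped BigOperators Matrix

noncomputable section

section Aux

variable {n : ℕ}

lemma L2inner_congr_left {ψ ψ' φ : (Fin n → ℝ) → ℂ} (h : ψ =ᵐ[volume] ψ') :
    L2inner ψ φ = L2inner ψ' φ := by
  unfold L2inner
  exact integral_congr_ae (h.mono fun x hx => by simp only [hx])

lemma L2inner_congr_right {ψ φ φ' : (Fin n → ℝ) → ℂ} (h : φ =ᵐ[volume] φ') :
    L2inner ψ φ = L2inner ψ φ' := by
  unfold L2inner
  exact integral_congr_ae (h.mono fun x hx => by simp only [hx])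

lemma normSq2_congr {ψ ψ' : (Fin n → ℝ) → ℂ} (h : ψ =ᵐ[volume] ψ') :
    normSq2 ψ = normSq2 ψ' := by
  unfold normSq2
  exact integral_congr_ae (h.mono fun x hx => by simp only [hx])

lemma L2inner_self (ψ : (Fin n → ℝ) → ℂ) : L2inner ψ ψ = ((normSq2 ψ : ℝ) : ℂ) := by
  unfold L2inner normSq2
  calc ∫ x : Fin n → ℝ, ψ x * (starRingEnd ℂ) (ψ x)
      = ∫ x : Fin n → ℝ, ((‖ψ x‖ ^ 2 : ℝ) : ℂ) := by
        apply integral_congr_ae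
        filter_upwards with x
        rw [Complex.mul_conj]
        simp [Complex.normSq_eq_norm_sq]
    _ = _ := integral_ofReal

lemma heis_memLp (hb : ℝ) (z : PS n) {φ : (Fin n → ℝ) → ℂ} (hφ : MemLp φ 2 volume) :
    MemLp (heis hb z φ) 2 volume := by
  have h1 : MemLp (fun x => φ (x - z.1)) 2 volume :=
    hφ.comp_measurePreserving (measurePreserving_sub_right volume z.1)
  have hcont : Continuous (fun x : Fin n → ℝ =>
      Complex.exp ((Complex.I / (hb : ℂ)) *
        ((dotR z.2 x - dotR z.2 z.1 / 2 : ℝ) : ℂ))) := by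
    apply Complex.continuous_exp.comp
    apply continuous_const.mul
    apply Complex.continuous_ofReal.comp
    apply Continuous.sub _ continuous_const
    exact continuous_finset_sum _ fun i _ => continuous_const.mul (continuous_apply i)
  have haesm : AEStronglyMeasurable (heis hb z φ) volume := by
    unfold heis
    exact hcont.aestronglyMeasurable.mul h1.aestronglyMeasurable
  refine h1.of_le haesm ?_
  filter_upwards with x
  unfold heis
  rw [norm_mul, Complex.norm_exp]
  simp [Complex.div_re, Complex.mul_re]

lemma vec_unvec (v : (Fin n ⊕ Fin n) → ℝ) : vec (unvec v) = v := by
  funext i; cases i <;> rfl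

lemma unvec_injective : Function.Injective (unvec (n := n)) := by
  intro a b h
  have := congrArg vec h
  rwa [vec_unvec, vec_unvec] at this

lemma vec_injective : Function.Injective (vec (n := n)) := by
  intro a b h
  have h1 : a.1 = b.1 := by funext i; exact congrFun h (Sum.inl i)
  have h2 : a.2 = b.2 := by funext i; exact congrFun h (Sum.inr i)
  exact Prod.ext h1 h2

lemma symplectic_det_ne_zero {S : Matrix (Fin n ⊕ Fin n) (Fin n ⊕ Fin n) ℝ}
    (hS : Sᵀ * JmatR n * S = JmatR n) : S.det ≠ 0 := by
  have hJ2 : JmatR n * JmatR n = -1 := by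
    unfold JmatR
    rw [Matrix.fromBlocks_multiply]
    ext i j
    cases i <;> cases j <;>
      simp [Matrix.one_apply, Matrix.fromBlocks, Matrix.neg_apply]
  have hdetJ : (JmatR n).det ≠ 0 := by
    have h := congrArg Matrix.det hJ2
    rw [Matrix.det_mul, Matrix.det_neg, Matrix.det_one, mul_one] at h
    intro h0
    rw [h0, mul_zero] at h
    exact pow_ne_zero _ (by norm_num : (-1 : ℝ) ≠ 0) h.symm
  have h := congrArg Matrix.det hS
  rw [Matrix.det_mul, Matrix.det_mul, Matrix.det_transpose] at h
  intro h0
  rw [h0] at h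
  simp at h
  exact hdetJ h.symm

lemma symp_map_injective {S : Matrix (Fin n ⊕ Fin n) (Fin n ⊕ Fin n) ℝ}
    (hS : Sᵀ * JmatR n * S = JmatR n) :
    Function.Injective (fun z : PS n => unvec (S.mulVec (vec z))) := by
  have hU : IsUnit S := (Matrix.isUnit_iff_isUnit_det S).mpr
    (isUnit_iff_ne_zero.mpr (symplectic_det_ne_zero hS))
  have hmv : Function.Injective S.mulVec := Matrix.mulVec_injective_iff_isUnit.mpr hU
  exact unvec_injective.comp (hmv.comp vec_injective)

end Aux

/-- symplectic covariance of Weyl–Heisenberg frames.  `U` is a unitary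
operator on `L²(ℝⁿ)` (given on representatives: it preserves membership in `L²`,
preserves inner products, and is surjective onto `L²` up to a.e. equality) which
satisfies the symplectic covariance relation `U T̂(z) U⁻¹ = T̂(Sz)`. -/
theorem stmt4 (hb : ℝ) (hhb : 0 < hb) (n : ℕ)
    (S : Matrix (Fin n ⊕ Fin n) (Fin n ⊕ Fin n) ℝ) (hS : Sᵀ * JmatR n * S = JmatR n)
    (U : ((Fin n → ℝ) → ℂ) → ((Fin n → ℝ) → ℂ))
    (hUmem : ∀ ψ, MemLp ψ 2 volume → MemLp (U ψ) 2 volume)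
    (hUadd : ∀ ψ φ, U (ψ + φ) = U ψ + U φ)
    (hUsmul : ∀ (c : ℂ) ψ, U (c • ψ) = c • U ψ)
    (hUinner : ∀ ψ φ, MemLp ψ 2 volume → MemLp φ 2 volume →
      L2inner (U ψ) (U φ) = L2inner ψ φ)
    (hUsurj : ∀ ψ', MemLp ψ' 2 volume →
      ∃ ψ, MemLp ψ 2 volume ∧ U ψ =ᵐ[volume] ψ')
    (hUcov : ∀ (z : PS n) (ψ : (Fin n → ℝ) → ℂ),
      U (heis hb z ψ) =ᵐ[volume] heis hb (unvec (S.mulVec (vec z))) (U ψ)) :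
    ∀ (φ : (Fin n → ℝ) → ℂ), MemLp φ 2 volume →
      ∀ (Λ : Set (PS n)), Λ.Countable →
        (∀ a b : ℝ, 0 < a → 0 < b →
          (IsWHFrame hb φ Λ a b ↔
            IsWHFrame hb (U φ) ((fun z => unvec (S.mulVec (vec z))) '' Λ) a b)) ∧
        ((∃ a : ℝ, 0 < a ∧ IsWHFrame hb φ Λ a a) ↔
          (∃ a : ℝ, 0 < a ∧
            IsWHFrame hb (U φ) ((fun z => unvec (S.mulVec (vec z))) '' Λ) a a)) := by
  intro φ hφ Λ hΛ
  set f : PS n → PS n := fun z => unvec (S.mulVec (vec z)) with hf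
  have hfinj : Function.Injective f := symp_map_injective hS
  -- norm preservation
  have hnorm : ∀ ψ, MemLp ψ 2 volume → normSq2 (U ψ) = normSq2 ψ := by
    intro ψ hψ
    have h := hUinner ψ ψ hψ hψ
    rw [L2inner_self, L2inner_self] at h
    exact_mod_cast h
  -- per-term identity
  have hterm : ∀ (ψ : (Fin n → ℝ) → ℂ), MemLp ψ 2 volume → ∀ z : PS n,
      L2inner (U ψ) (heis hb (f z) (U φ)) = L2inner ψ (heis hb z φ) := by
    intro ψ hψ z
    rw [L2inner_congr_right (hUcov z φ).symm]
    exact hUinner ψ (heis hb z φ) hψ (heis_memLp hb z hφ)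
  -- sum identity
  have hsum : ∀ (ψ : (Fin n → ℝ) → ℂ), MemLp ψ 2 volume →
      (∑' w : (f '' Λ), ‖L2inner (U ψ) (heis hb (w : PS n) (U φ))‖ ^ 2) =
      ∑' zl : Λ, ‖L2inner ψ (heis hb (zl : PS n) φ)‖ ^ 2 := by
    intro ψ hψ
    rw [← Equiv.tsum_eq (Equiv.Set.imageOfInjOn f Λ (hfinj.injOn))
      (fun w : (f '' Λ) => ‖L2inner (U ψ) (heis hb (w : PS n) (U φ))‖ ^ 2)]
    apply tsum_congr
    intro zl
    show ‖L2inner (U ψ) (heis hb (f ↑zl) (U φ))‖ ^ 2 = ‖L2inner ψ (heis hb (↑zl : PS n) φ)‖ ^ 2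
    rw [hterm ψ hψ zl]
  have hmain : ∀ a b : ℝ,
      IsWHFrame hb φ Λ a b ↔ IsWHFrame hb (U φ) (f '' Λ) a b := by
    intro a b
    constructor
    · intro hF ψ' hψ'
      obtain ⟨ψ, hψ, hae⟩ := hUsurj ψ' hψ'
      have hae' : ψ' =ᵐ[volume] U ψ := hae.symm
      have hn : normSq2 ψ' = normSq2 ψ := by
        rw [normSq2_congr hae', hnorm ψ hψ]
      have hs : (∑' w : (f '' Λ), ‖L2inner ψ' (heis hb (w : PS n) (U φ))‖ ^ 2) =
          ∑' zl : Λ, ‖L2inner ψ (heis hb (zl : PS n) φ)‖ ^ 2 := by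
        rw [← hsum ψ hψ]
        exact tsum_congr fun w => by rw [L2inner_congr_left hae']
      rw [hn, hs]
      exact hF ψ hψ
    · intro hF ψ hψ
      have h := hF (U ψ) (hUmem ψ hψ)
      rw [hnorm ψ hψ, hsum ψ hψ] at h
      exact h
  refine ⟨fun a b ha hb' => hmain a b, ?_⟩
  constructor
  · rintro ⟨a, ha, h⟩; exact ⟨a, ha, (hmain a a).mp h⟩
  · rintro ⟨a, ha, h⟩; exact ⟨a, ha, (hmain a a).mpr h⟩
end
end

section
/- For every r > 0, every γ ∈ ℝ, and all α, β > 0 with αβ = 1: ∑_{k,l ∈ ℤ} e^{-r(α²k² + 2αβγ·kl + β²(1 + γ²)l²)} ≤ ∑_{k,l ∈ ℤ} e^{-r(k²/α² + l²/β²)}. -/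
open Real


set_option maxHeartbeats 1000000 in
lemma summable_exp_neg_int_sq {a : ℝ} (ha : 0 < a) :
    Summable fun n : ℤ => Real.exp (-a * (n : ℝ) ^ 2) := by
  have hgeom : Summable fun n : ℕ => Real.exp (-a) ^ n :=
    summable_geometric_of_lt_one (Real.exp_pos _).le
      (Real.exp_lt_one_iff.2 (neg_neg_iff_pos.2 ha))
  have hnat : Summable fun n : ℕ => Real.exp (-a * (n : ℝ) ^ 2) := by
    apply Summable.of_nonneg_of_le (fun n => (Real.exp_pos _).le) _ hgeom
    intro n
    rw [← Real.exp_nat_mul]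
    apply Real.exp_le_exp.2
    have h1 : (n : ℝ) ≤ (n : ℝ) ^ 2 := by
      rcases Nat.eq_zero_or_pos n with h | h
      · simp [h]
      · have : (1 : ℝ) ≤ (n : ℝ) := by exact_mod_cast h
        nlinarith
    nlinarith
  apply Summable.of_nat_of_neg hnat
  simpa using hnat

lemma summable_gauss_cos {a : ℝ} (ha : 0 < a) (c : ℝ) :
    Summable fun n : ℤ =>
      Real.exp (-π ^ 2 * (n : ℝ) ^ 2 / a) * Real.cos (2 * π * c * (n : ℝ)) := by
  have hg : Summable fun n : ℤ => Real.exp (-(π ^ 2 / a) * (n : ℝ) ^ 2) :=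
    summable_exp_neg_int_sq (by positivity)
  apply Summable.of_norm_bounded hg
  intro n
  rw [norm_mul, Real.norm_eq_abs, Real.norm_eq_abs, Real.abs_exp]
  calc Real.exp (-π ^ 2 * (n:ℝ) ^ 2 / a) * |Real.cos (2 * π * c * n)|
      ≤ Real.exp (-π ^ 2 * (n:ℝ) ^ 2 / a) * 1 := by
        exact mul_le_mul_of_nonneg_left (Real.abs_cos_le_one _) (Real.exp_pos _).le
    _ = Real.exp (-(π ^ 2 / a) * (n : ℝ) ^ 2) := by rw [mul_one]; ring_nf

lemma poisson_shift {a : ℝ} (ha : 0 < a) (c : ℝ) :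
    (∑' n : ℤ, Real.exp (-a * ((n : ℝ) + c) ^ 2))
      = (π / a) ^ (1 / 2 : ℝ) *
        ∑' n : ℤ, Real.exp (-π ^ 2 * (n : ℝ) ^ 2 / a) * Real.cos (2 * π * c * (n : ℝ)) := by
  have hπ : (0 : ℝ) < π := Real.pi_pos
  have hπC : (π : ℂ) ≠ 0 := by exact_mod_cast hπ.ne'
  have haC : (a : ℂ) ≠ 0 := by exact_mod_cast ha.ne'
  have hI : ∀ x y : ℂ, (x + Complex.I * y) ^ 2 = x ^ 2 + 2 * x * y * Complex.I - y ^ 2 := by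
    intro x y; linear_combination y ^ 2 * Complex.I_sq
  -- the complex Poisson formula
  have hAre : 0 < (((a / π : ℝ) : ℂ)).re := by simpa using div_pos ha hπ
  have key := Complex.tsum_exp_neg_quadratic hAre ((-(a * c) / π : ℝ) : ℂ)
  -- the target complex sum
  set g : ℤ → ℂ := fun n =>
    Complex.exp (((-π ^ 2 * (n : ℝ) ^ 2 / a : ℝ) : ℂ) + ((2 * π * c * (n : ℝ) : ℝ) : ℂ) * Complex.I)
    with hg
  have hgsum : Summable g := by
    apply Summable.of_norm
    have hg2 : Summable fun n : ℤ => Real.exp (-(π ^ 2 / a) * (n : ℝ) ^ 2) :=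
      summable_exp_neg_int_sq (by positivity)
    apply hg2.congr
    intro n
    rw [hg, Complex.norm_exp]
    have : ((((-π ^ 2 * (n : ℝ) ^ 2 / a : ℝ)) : ℂ) + ((2 * π * c * (n : ℝ) : ℝ) : ℂ) * Complex.I).re
        = -π ^ 2 * (n : ℝ) ^ 2 / a := by
      simp only [Complex.add_re, Complex.ofReal_re, Complex.mul_re, Complex.I_re,
        Complex.I_im, Complex.ofReal_im, mul_zero, zero_mul, mul_one, sub_zero,
        zero_sub, neg_zero, add_zero]
    rw [this]
    congr 1
    ring
  have hmain : ((∑' n : ℤ, Real.exp (-a * ((n : ℝ) + c) ^ 2) : ℝ) : ℂ)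
      = (((π / a) ^ (1 / 2 : ℝ) : ℝ) : ℂ) * ∑' n : ℤ, g n := by
    rw [Complex.ofReal_tsum]
    have e1 : ∀ n : ℤ, ((Real.exp (-a * ((n : ℝ) + c) ^ 2) : ℝ) : ℂ)
        = Complex.exp (((-(a * c ^ 2) : ℝ) : ℂ)) *
          Complex.exp (-π * ((a / π : ℝ) : ℂ) * (n : ℂ) ^ 2 +
            2 * π * ((-(a * c) / π : ℝ) : ℂ) * (n : ℂ)) := by
      intro n
      rw [Complex.ofReal_exp, ← Complex.exp_add]
      congr 1
      push_cast
      field_simp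
      ring
    have e2 : ∀ n : ℤ, Complex.exp (-(π : ℂ) / ((a / π : ℝ) : ℂ) *
          ((n : ℂ) + Complex.I * ((-(a * c) / π : ℝ) : ℂ)) ^ 2)
        = Complex.exp (((a * c ^ 2 : ℝ) : ℂ)) * g n := by
      intro n
      rw [hg, ← Complex.exp_add]
      congr 1
      rw [hI]
      push_cast
      field_simp
      ring
    calc (∑' n : ℤ, ((Real.exp (-a * ((n : ℝ) + c) ^ 2) : ℝ) : ℂ))
        = ∑' n : ℤ, Complex.exp (((-(a * c ^ 2) : ℝ) : ℂ)) *
            Complex.exp (-π * ((a / π : ℝ) : ℂ) * (n : ℂ) ^ 2 +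
              2 * π * ((-(a * c) / π : ℝ) : ℂ) * (n : ℂ)) := tsum_congr e1
      _ = Complex.exp (((-(a * c ^ 2) : ℝ) : ℂ)) *
            ∑' n : ℤ, Complex.exp (-π * ((a / π : ℝ) : ℂ) * (n : ℂ) ^ 2 +
              2 * π * ((-(a * c) / π : ℝ) : ℂ) * (n : ℂ)) := tsum_mul_left
      _ = Complex.exp (((-(a * c ^ 2) : ℝ) : ℂ)) *
            (1 / ((a / π : ℝ) : ℂ) ^ (1 / 2 : ℂ) *
              ∑' n : ℤ, Complex.exp (-(π : ℂ) / ((a / π : ℝ) : ℂ) *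
                ((n : ℂ) + Complex.I * ((-(a * c) / π : ℝ) : ℂ)) ^ 2)) := by rw [key]
      _ = Complex.exp (((-(a * c ^ 2) : ℝ) : ℂ)) *
            (1 / ((a / π : ℝ) : ℂ) ^ (1 / 2 : ℂ) *
              (Complex.exp (((a * c ^ 2 : ℝ) : ℂ)) * ∑' n : ℤ, g n)) := by
          rw [tsum_congr e2, tsum_mul_left]
      _ = (((π / a) ^ (1 / 2 : ℝ) : ℝ) : ℂ) * ∑' n : ℤ, g n := by
          rw [show (1 / 2 : ℂ) = ((1 / 2 : ℝ) : ℂ) by norm_num,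
            ← Complex.ofReal_cpow (div_pos ha hπ).le]
          have hXY : Complex.exp (((-(a * c ^ 2) : ℝ) : ℂ)) *
              Complex.exp (((a * c ^ 2 : ℝ) : ℂ)) = 1 := by
            rw [← Complex.exp_add]
            rw [show ((-(a * c ^ 2) : ℝ) : ℂ) + ((a * c ^ 2 : ℝ) : ℂ) = 0 by push_cast; ring]
            exact Complex.exp_zero
          have huv : ((a / π) ^ (1 / 2 : ℝ) : ℝ) * ((π / a) ^ (1 / 2 : ℝ) : ℝ) = 1 := by
            rw [← Real.mul_rpow (div_pos ha hπ).le (div_pos hπ ha).le]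
            rw [show a / π * (π / a) = 1 by field_simp]
            exact Real.one_rpow _
          have hune : (((a / π) ^ (1 / 2 : ℝ) : ℝ) : ℂ) ≠ 0 := by
            exact_mod_cast (Real.rpow_pos_of_pos (div_pos ha hπ) _).ne'
          have hdiv : (1 : ℂ) / (((a / π) ^ (1 / 2 : ℝ) : ℝ) : ℂ)
              = (((π / a) ^ (1 / 2 : ℝ) : ℝ) : ℂ) := by
            rw [div_eq_iff hune, ← Complex.ofReal_mul]
            norm_cast
            linarith [huv]
          rw [hdiv]
          linear_combination (((π / a) ^ (1 / 2 : ℝ) : ℝ) : ℂ) * (∑' n : ℤ, g n) * hXY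
  have hre := congrArg Complex.re hmain
  rw [Complex.ofReal_re, Complex.re_ofReal_mul, Complex.re_tsum hgsum] at hre
  rw [hre]
  congr 1
  apply tsum_congr
  intro n
  rw [hg, Complex.exp_re]
  congr 1
  · congr 1
    simp only [Complex.add_re, Complex.ofReal_re, Complex.mul_re, Complex.I_re,
      Complex.I_im, Complex.ofReal_im, mul_zero, zero_mul, mul_one, sub_zero,
      zero_sub, neg_zero, add_zero]
  · congr 1
    simp only [Complex.add_im, Complex.ofReal_im, Complex.mul_im, Complex.I_re,
      Complex.I_im, Complex.ofReal_re, mul_zero, zero_mul, mul_one, zero_add,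
      add_zero]

lemma shift_le {a : ℝ} (ha : 0 < a) (c : ℝ) :
    (∑' n : ℤ, Real.exp (-a * ((n : ℝ) + c) ^ 2)) ≤ ∑' n : ℤ, Real.exp (-a * (n : ℝ) ^ 2) := by
  have h0 := poisson_shift ha 0
  have hc := poisson_shift ha c
  simp only [add_zero, mul_zero, zero_mul, Real.cos_zero, mul_one] at h0
  rw [hc, h0]
  have hg : Summable fun n : ℤ => Real.exp (-π ^ 2 * (n : ℝ) ^ 2 / a) := by
    have := summable_gauss_cos ha 0
    simpa using this
  apply mul_le_mul_of_nonneg_left _ (Real.rpow_nonneg (by positivity) _)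
  apply Summable.tsum_le_tsum _ (summable_gauss_cos ha c) hg
  intro n
  have h1 := Real.cos_le_one (2 * π * c * (n : ℝ))
  nlinarith [Real.exp_pos (-π ^ 2 * (n : ℝ) ^ 2 / a)]


set_option maxHeartbeats 1000000 in
/-- a theta-function type inequality for sheared lattices. -/
theorem stmt13 (r : ℝ) (hr : 0 < r) (γ : ℝ) (α β : ℝ) (hα : 0 < α) (hβ : 0 < β)
    (hαβ : α * β = 1) :
    ∑' kl : ℤ × ℤ,
        Real.exp (-r * (α ^ 2 * (kl.1 : ℝ) ^ 2 +
          2 * α * β * γ * (kl.1 : ℝ) * (kl.2 : ℝ) +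
          β ^ 2 * (1 + γ ^ 2) * (kl.2 : ℝ) ^ 2)) ≤
      ∑' kl : ℤ × ℤ,
        Real.exp (-r * ((kl.1 : ℝ) ^ 2 / α ^ 2 + (kl.2 : ℝ) ^ 2 / β ^ 2)) := by
  have hb : β = α⁻¹ := eq_inv_of_mul_eq_one_left (by linarith [hαβ, mul_comm α β] )
  have hA : Summable fun k : ℤ => Real.exp (-(r * α ^ 2) * (k : ℝ) ^ 2) :=
    summable_exp_neg_int_sq (by positivity)
  have hB : Summable fun k : ℤ => Real.exp (-(r * β ^ 2) * (k : ℝ) ^ 2) :=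
    summable_exp_neg_int_sq (by positivity)
  set A := ∑' k : ℤ, Real.exp (-(r * α ^ 2) * (k : ℝ) ^ 2) with hAdef
  set B := ∑' k : ℤ, Real.exp (-(r * β ^ 2) * (k : ℝ) ^ 2) with hBdef
  -- the right-hand side equals B * A
  have hterm : ∀ kl : ℤ × ℤ,
      Real.exp (-r * ((kl.1 : ℝ) ^ 2 / α ^ 2 + (kl.2 : ℝ) ^ 2 / β ^ 2))
        = Real.exp (-(r * β ^ 2) * (kl.1 : ℝ) ^ 2) * Real.exp (-(r * α ^ 2) * (kl.2 : ℝ) ^ 2) := by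
    intro kl
    rw [← Real.exp_add]
    congr 1
    rw [hb]
    field_simp
    ring
  have hsum2 : Summable fun kl : ℤ × ℤ =>
      Real.exp (-(r * β ^ 2) * (kl.1 : ℝ) ^ 2) * Real.exp (-(r * α ^ 2) * (kl.2 : ℝ) ^ 2) :=
    hB.mul_of_nonneg hA (fun _ => (Real.exp_pos _).le) (fun _ => (Real.exp_pos _).le)
  have hRHS : (∑' kl : ℤ × ℤ,
      Real.exp (-r * ((kl.1 : ℝ) ^ 2 / α ^ 2 + (kl.2 : ℝ) ^ 2 / β ^ 2))) = B * A := by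
    rw [tsum_congr hterm, Summable.tsum_prod' hsum2
      (fun b => hA.mul_left (Real.exp (-(r * β ^ 2) * (b : ℝ) ^ 2)))]
    refine Eq.trans (tsum_congr fun b : ℤ => (tsum_mul_left :
        ∑' c : ℤ, Real.exp (-(r * β ^ 2) * (b : ℝ) ^ 2) * Real.exp (-(r * α ^ 2) * (c : ℝ) ^ 2)
        = Real.exp (-(r * β ^ 2) * (b : ℝ) ^ 2) *
          ∑' c : ℤ, Real.exp (-(r * α ^ 2) * (c : ℝ) ^ 2))) ?_
    exact tsum_mul_right
  rw [hRHS]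
  -- the left-hand side
  by_cases hf : Summable fun kl : ℤ × ℤ =>
      Real.exp (-r * (α ^ 2 * (kl.1 : ℝ) ^ 2 +
        2 * α * β * γ * (kl.1 : ℝ) * (kl.2 : ℝ) + β ^ 2 * (1 + γ ^ 2) * (kl.2 : ℝ) ^ 2))
  case neg =>
    rw [tsum_eq_zero_of_not_summable hf]
    have hApos : 0 ≤ A := tsum_nonneg fun _ => (Real.exp_pos _).le
    have hBpos : 0 ≤ B := tsum_nonneg fun _ => (Real.exp_pos _).le
    positivity
  case pos =>
  have hswap := (Equiv.prodComm ℤ ℤ).tsum_eq fun kl : ℤ × ℤ =>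
    Real.exp (-r * (α ^ 2 * (kl.1 : ℝ) ^ 2 +
      2 * α * β * γ * (kl.1 : ℝ) * (kl.2 : ℝ) + β ^ 2 * (1 + γ ^ 2) * (kl.2 : ℝ) ^ 2))
  rw [← hswap]
  have hG : Summable fun kl : ℤ × ℤ =>
      Real.exp (-r * (α ^ 2 * (kl.2 : ℝ) ^ 2 +
        2 * α * β * γ * (kl.2 : ℝ) * (kl.1 : ℝ) + β ^ 2 * (1 + γ ^ 2) * (kl.1 : ℝ) ^ 2)) :=
    hf.prod_symm
  have hGfact : ∀ (l k : ℤ),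
      Real.exp (-r * (α ^ 2 * (k : ℝ) ^ 2 +
        2 * α * β * γ * (k : ℝ) * (l : ℝ) + β ^ 2 * (1 + γ ^ 2) * (l : ℝ) ^ 2))
      = Real.exp (-(r * β ^ 2) * (l : ℝ) ^ 2) *
        Real.exp (-(r * α ^ 2) * ((k : ℝ) + β * γ * (l : ℝ) / α) ^ 2) := by
    intro l k
    rw [← Real.exp_add]
    congr 1
    field_simp
    ring
  calc (∑' kl : ℤ × ℤ, Real.exp (-r * (α ^ 2 * (kl.2 : ℝ) ^ 2 +
          2 * α * β * γ * (kl.2 : ℝ) * (kl.1 : ℝ) + β ^ 2 * (1 + γ ^ 2) * (kl.1 : ℝ) ^ 2)))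
      = ∑' (l : ℤ) (k : ℤ), Real.exp (-r * (α ^ 2 * (k : ℝ) ^ 2 +
          2 * α * β * γ * (k : ℝ) * (l : ℝ) + β ^ 2 * (1 + γ ^ 2) * (l : ℝ) ^ 2)) :=
        Summable.tsum_prod' hG hG.prod_factor
    _ = ∑' l : ℤ, Real.exp (-(r * β ^ 2) * (l : ℝ) ^ 2) *
          ∑' k : ℤ, Real.exp (-(r * α ^ 2) * ((k : ℝ) + β * γ * (l : ℝ) / α) ^ 2) := by
        refine tsum_congr fun l => ?_
        rw [tsum_congr (hGfact l)]
        exact tsum_mul_left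
    _ ≤ ∑' l : ℤ, Real.exp (-(r * β ^ 2) * (l : ℝ) ^ 2) * A := by
        apply Summable.tsum_le_tsum _ _ (hB.mul_right A)
        · intro l
          exact mul_le_mul_of_nonneg_left (shift_le (by positivity) _) (Real.exp_pos _).le
        · have h1 := hG.prod
          apply h1.congr
          intro l
          rw [tsum_congr (hGfact l)]
          exact tsum_mul_left
    _ = B * A := tsum_mul_right
end
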